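/- Fix η > 0 and define, for s in the interval I_η = (0, 2η/σ²], the function t₁(s) = ( −[a² + 2σ²s(−a+η) − 1] − √Γ(s) )/(4σ²), where Γ(s) = 4σ⁴[(−a+η)² − 1]s² + 4σ²[(−a+η)(a² − 1) + 2η]s + (a² − 1)². Let η₁ = (a² − 1)/a and η₂ = (3a + √(a² + 8))/4. Then: (1) if 0 < η ≤ η₁, t₁ is an increasing function of s on I_η; (2) if η ≥ η₂, t₁ is a decreasing function of s on I_η; (3) if η₁ < η < η₂, then with s* = aη(η − η₁)/(σ²(1 − (η − a)²)) one has s* ∈ (0, 2η/σ²), t₁ is decreasing on (0, s*) and increasing on (s*, 2η/σ²), and the derivative of t₁ at s* equals 0. -/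

import Mathlib

set_option maxHeartbeats 1000000

/-- The discriminant `Γ(s)` of the quadratic associated with the sequence `β_ℓ`. -/
noncomputable def Gam (a σ η s : ℝ) : ℝ :=
  4 * σ ^ 4 * ((-a + η) ^ 2 - 1) * s ^ 2
    + 4 * σ ^ 2 * ((-a + η) * (a ^ 2 - 1) + 2 * η) * s + (a ^ 2 - 1) ^ 2

/-- The smaller root `t₁(s) = (−[a² + 2σ²s(−a+η) − 1] − √Γ(s))/(4σ²)`. -/
noncomputable def tOne (a σ η : ℝ) (s : ℝ) : ℝ :=
  (-(a ^ 2 + 2 * σ ^ 2 * s * (-a + η) - 1) - Real.sqrt (Gam a σ η s)) / (4 * σ ^ 2)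

private lemma sqlt {x y : ℝ} (hy : 0 ≤ y) (h : x ^ 2 < y ^ 2) : x < y :=
  lt_of_pow_lt_pow_left₀ 2 hy h

private lemma signA (a η x S : ℝ) (ha : 1 < a) (hη : 0 < η) (hx : 0 < x) (hx2 : x < 2 * η)
    (hcase : a * η ≤ a ^ 2 - 1) (hS : 0 < S)
    (hS2 : S ^ 2 = (2 * (η - a) * x + (a ^ 2 - 1)) ^ 2 + 4 * x * (2 * η - x)) :
    (η - a) * S + (((η - a) ^ 2 - 1) * (2 * x - a) + (a * η ^ 2 - η * (a ^ 2 - 1))) < 0 := by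
  have hηa : η < a := by nlinarith
  have hK : a * η ^ 2 - η * (a ^ 2 - 1) ≤ 0 := by nlinarith
  by_cases hq : 0 < (x - a) * (((η - a) ^ 2 - 1) * x + (a * η ^ 2 - η * (a ^ 2 - 1)))
  · have h2 : (((η - a) ^ 2 - 1) * (2 * x - a) + (a * η ^ 2 - η * (a ^ 2 - 1))) ^ 2
        < ((a - η) * S) ^ 2 := by
      have hGS : ((a - η) * S) ^ 2 = (η - a) ^ 2 *
          ((2 * (η - a) * x + (a ^ 2 - 1)) ^ 2 + 4 * x * (2 * η - x)) := by
        rw [mul_pow, hS2]; ring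
      rw [hGS]; nlinarith [hq]
    have h3 := sqlt (mul_nonneg (by linarith : (0:ℝ) ≤ a - η) hS.le) h2
    linarith
  · push_neg at hq
    have hGp : ((η - a) ^ 2 - 1) * (2 * x - a) + (a * η ^ 2 - η * (a ^ 2 - 1)) ≤ 0 := by
      by_contra h
      push_neg at h
      rcases lt_trichotomy ((η - a) ^ 2 - 1) 0 with hu | hu | hu
      · have h2x : 2 * x - a < 0 := by nlinarith
        have hf1 : x - a < 0 := by linarith
        have hf2 : ((η - a) ^ 2 - 1) * x + (a * η ^ 2 - η * (a ^ 2 - 1)) < 0 := by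
          nlinarith [mul_neg_of_neg_of_pos hu hx]
        nlinarith [mul_pos_of_neg_of_neg hf1 hf2]
      · have h0 : ((η - a) ^ 2 - 1) * (2 * x - a) = 0 := by rw [hu]; ring
        have hη' : η ≤ a - 1 := by nlinarith [sq_nonneg (a - η - 1)]
        nlinarith
      · have hw : 0 ≤ a - 1 - η := by nlinarith [sq_nonneg (a - η - 1)]
        have hT : ((η - a) ^ 2 - 1) * (4 * η - a) + (a * η ^ 2 - η * (a ^ 2 - 1)) < 0 := by
          nlinarith [mul_pos hη hη, mul_nonneg hη.le hw, mul_nonneg hw hw,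
            mul_nonneg hw (sq_nonneg (2 * η - a))]
        nlinarith [mul_pos hu (by linarith : (0:ℝ) < 2 * η - x)]
    nlinarith [mul_pos (show (0:ℝ) < a - η by linarith) hS]

private lemma signB (a η x S : ℝ) (ha : 1 < a) (hb : a < η) (hx : 0 < x) (hx2 : x < 2 * η)
    (hp : 0 ≤ 2 * η ^ 2 - 3 * a * η + a ^ 2 - 1) (hS : 0 < S)
    (hS2 : S ^ 2 = (2 * (η - a) * x + (a ^ 2 - 1)) ^ 2 + 4 * x * (2 * η - x)) :
    0 < (η - a) * S + (((η - a) ^ 2 - 1) * (2 * x - a) + (a * η ^ 2 - η * (a ^ 2 - 1))) := by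
  have hη : 0 < η := by linarith
  have hK : 0 < a * η ^ 2 - η * (a ^ 2 - 1) := by nlinarith
  rcases le_or_gt 0 (((η - a) ^ 2 - 1) * (2 * x - a) + (a * η ^ 2 - η * (a ^ 2 - 1)))
    with h | h
  · nlinarith [mul_pos (show (0:ℝ) < η - a by linarith) hS]
  · have hu : (η - a) ^ 2 - 1 < 0 := by
      by_contra hu'
      push_neg at hu'
      nlinarith [mul_nonneg hu' hx.le, mul_pos (show (0:ℝ) < η - a by linarith)
        (show (0:ℝ) < a ^ 2 - 1 by nlinarith)]
    have hxa : a < x := by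
      by_contra hxa'
      push_neg at hxa'
      nlinarith [mul_nonneg (show (0:ℝ) ≤ 1 - (η - a) ^ 2 by linarith)
        (show (0:ℝ) ≤ 2 * a - 2 * x by linarith),
        mul_pos (show (0:ℝ) < η - a by linarith)
          (show (0:ℝ) < 2 * a * η - a ^ 2 + 1 by nlinarith)]
    have hux : 0 < ((η - a) ^ 2 - 1) * x + (a * η ^ 2 - η * (a ^ 2 - 1)) := by
      nlinarith [mul_pos (show (0:ℝ) < 1 - (η - a) ^ 2 by linarith)
        (show (0:ℝ) < 2 * η - x by linarith), mul_nonneg hη.le hp]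
    have hq := mul_pos (show (0:ℝ) < x - a by linarith) hux
    have h2 : (-(((η - a) ^ 2 - 1) * (2 * x - a) + (a * η ^ 2 - η * (a ^ 2 - 1)))) ^ 2
        < ((η - a) * S) ^ 2 := by
      have hGS : ((η - a) * S) ^ 2 = (η - a) ^ 2 *
          ((2 * (η - a) * x + (a ^ 2 - 1)) ^ 2 + 4 * x * (2 * η - x)) := by
        rw [mul_pow, hS2]
      rw [hGS]; nlinarith [hq]
    have h3 := sqlt (mul_nonneg (by linarith : (0:ℝ) ≤ η - a) hS.le) h2
    linarith

private lemma signC (a η x S : ℝ) (ha : 1 < a) (hη : 0 < η)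
    (hm : a ^ 2 - 1 < a * η) (hp : 2 * η ^ 2 - 3 * a * η + a ^ 2 - 1 < 0)
    (hx : 0 < x) (hxst : x * (1 - (η - a) ^ 2) < a * η ^ 2 - η * (a ^ 2 - 1))
    (hS : 0 < S)
    (hS2 : S ^ 2 = (2 * (η - a) * x + (a ^ 2 - 1)) ^ 2 + 4 * x * (2 * η - x)) :
    0 < (η - a) * S + (((η - a) ^ 2 - 1) * (2 * x - a) + (a * η ^ 2 - η * (a ^ 2 - 1))) := by
  have hb2 : (η - a) ^ 2 < 1 := by
    have hlow : -1 < η - a := by nlinarith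
    have hhigh : η - a < 1 := by nlinarith [sq_nonneg (η - a - 1)]
    nlinarith
  have hK : 0 < a * η ^ 2 - η * (a ^ 2 - 1) := by nlinarith
  rcases le_or_gt (η - a) 0 with hb | hb
  · have hR : 0 ≤ a * (1 - (η - a) ^ 2) - (a * η ^ 2 - η * (a ^ 2 - 1)) := by
      nlinarith [mul_nonneg (show (0:ℝ) ≤ a - η by linarith)
        (show (0:ℝ) ≤ 2 * a * η - a ^ 2 + 1 by nlinarith)]
    have hGp : 0 < ((η - a) ^ 2 - 1) * (2 * x - a) + (a * η ^ 2 - η * (a ^ 2 - 1)) := by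
      nlinarith
    have hxa : x < a := by
      by_contra hxa'
      push_neg at hxa'
      nlinarith [mul_le_mul_of_nonneg_right hxa' (show (0:ℝ) ≤ 1 - (η - a) ^ 2 by linarith)]
    have hux : 0 < ((η - a) ^ 2 - 1) * x + (a * η ^ 2 - η * (a ^ 2 - 1)) := by nlinarith
    have hq : (x - a) * (((η - a) ^ 2 - 1) * x + (a * η ^ 2 - η * (a ^ 2 - 1))) < 0 :=
      mul_neg_of_neg_of_pos (by linarith) hux
    have h2 : ((a - η) * S) ^ 2
        < (((η - a) ^ 2 - 1) * (2 * x - a) + (a * η ^ 2 - η * (a ^ 2 - 1))) ^ 2 := by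
      have hGS : ((a - η) * S) ^ 2 = (η - a) ^ 2 *
          ((2 * (η - a) * x + (a ^ 2 - 1)) ^ 2 + 4 * x * (2 * η - x)) := by
        rw [mul_pow, hS2]; ring
      rw [hGS]; nlinarith [hq]
    have h3 := sqlt hGp.le h2
    linarith
  · rcases le_or_gt x a with hxa | hxa
    · have hGp : 0 < ((η - a) ^ 2 - 1) * (2 * x - a) + (a * η ^ 2 - η * (a ^ 2 - 1)) := by
        nlinarith [mul_nonneg (show (0:ℝ) ≤ 1 - (η - a) ^ 2 by linarith)
          (show (0:ℝ) ≤ a - x by linarith)]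
      nlinarith [mul_pos hb hS]
    · have hux : 0 < ((η - a) ^ 2 - 1) * x + (a * η ^ 2 - η * (a ^ 2 - 1)) := by nlinarith
      have hq := mul_pos (show (0:ℝ) < x - a by linarith) hux
      have h2 : (-(((η - a) ^ 2 - 1) * (2 * x - a) + (a * η ^ 2 - η * (a ^ 2 - 1)))) ^ 2
          < ((η - a) * S) ^ 2 := by
        have hGS : ((η - a) * S) ^ 2 = (η - a) ^ 2 *
            ((2 * (η - a) * x + (a ^ 2 - 1)) ^ 2 + 4 * x * (2 * η - x)) := by
          rw [mul_pow, hS2]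
        rw [hGS]; nlinarith [hq]
      have h3 := sqlt (mul_nonneg hb.le hS.le) h2
      linarith

private lemma signD (a η x S : ℝ) (ha : 1 < a) (hη : 0 < η)
    (hm : a ^ 2 - 1 < a * η) (hp : 2 * η ^ 2 - 3 * a * η + a ^ 2 - 1 < 0)
    (hxst : a * η ^ 2 - η * (a ^ 2 - 1) < x * (1 - (η - a) ^ 2))
    (hS : 0 < S)
    (hS2 : S ^ 2 = (2 * (η - a) * x + (a ^ 2 - 1)) ^ 2 + 4 * x * (2 * η - x)) :
    (η - a) * S + (((η - a) ^ 2 - 1) * (2 * x - a) + (a * η ^ 2 - η * (a ^ 2 - 1))) < 0 := by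
  have hb2 : (η - a) ^ 2 < 1 := by
    have hlow : -1 < η - a := by nlinarith
    have hhigh : η - a < 1 := by nlinarith [sq_nonneg (η - a - 1)]
    nlinarith
  have hK : 0 < a * η ^ 2 - η * (a ^ 2 - 1) := by nlinarith
  rcases le_or_gt (η - a) 0 with hb | hb
  · have hR : 0 ≤ a * (1 - (η - a) ^ 2) - (a * η ^ 2 - η * (a ^ 2 - 1)) := by
      nlinarith [mul_nonneg (show (0:ℝ) ≤ a - η by linarith)
        (show (0:ℝ) ≤ 2 * a * η - a ^ 2 + 1 by nlinarith)]
    rcases lt_or_ge x a with hxa | hxa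
    · have hux : ((η - a) ^ 2 - 1) * x + (a * η ^ 2 - η * (a ^ 2 - 1)) < 0 := by nlinarith
      have hq := mul_pos_of_neg_of_neg (show x - a < 0 by linarith) hux
      have h2 : (((η - a) ^ 2 - 1) * (2 * x - a) + (a * η ^ 2 - η * (a ^ 2 - 1))) ^ 2
          < ((a - η) * S) ^ 2 := by
        have hGS : ((a - η) * S) ^ 2 = (η - a) ^ 2 *
            ((2 * (η - a) * x + (a ^ 2 - 1)) ^ 2 + 4 * x * (2 * η - x)) := by
          rw [mul_pow, hS2]; ring
        rw [hGS]; nlinarith [hq]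
      have h3 := sqlt (mul_nonneg (by linarith : (0:ℝ) ≤ a - η) hS.le) h2
      linarith
    · have hGp : ((η - a) ^ 2 - 1) * (2 * x - a) + (a * η ^ 2 - η * (a ^ 2 - 1)) < 0 := by
        nlinarith [mul_nonneg (show (0:ℝ) ≤ 1 - (η - a) ^ 2 by linarith)
          (show (0:ℝ) ≤ x - a by linarith)]
      nlinarith [mul_nonneg (show (0:ℝ) ≤ a - η by linarith) hS.le]
  · have hxa : a < x := by
      have hR : a * (1 - (η - a) ^ 2) < a * η ^ 2 - η * (a ^ 2 - 1) := by
        nlinarith [mul_pos hb (show (0:ℝ) < 2 * a * η - a ^ 2 + 1 by nlinarith)]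
      by_contra hxa'
      push_neg at hxa'
      nlinarith [mul_le_mul_of_nonneg_right hxa' (show (0:ℝ) ≤ 1 - (η - a) ^ 2 by linarith)]
    have hGp : ((η - a) ^ 2 - 1) * (2 * x - a) + (a * η ^ 2 - η * (a ^ 2 - 1)) < 0 := by
      nlinarith [mul_pos (show (0:ℝ) < 1 - (η - a) ^ 2 by linarith)
        (show (0:ℝ) < x - a by linarith)]
    have hux : ((η - a) ^ 2 - 1) * x + (a * η ^ 2 - η * (a ^ 2 - 1)) < 0 := by nlinarith
    have hq := mul_neg_of_pos_of_neg (show 0 < x - a by linarith) hux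
    have h2 : ((η - a) * S) ^ 2
        < (-(((η - a) ^ 2 - 1) * (2 * x - a) + (a * η ^ 2 - η * (a ^ 2 - 1)))) ^ 2 := by
      have hGS : ((η - a) * S) ^ 2 = (η - a) ^ 2 *
          ((2 * (η - a) * x + (a ^ 2 - 1)) ^ 2 + 4 * x * (2 * η - x)) := by
        rw [mul_pow, hS2]
      rw [hGS]; nlinarith [hq]
    have h3 := sqlt (by linarith : (0:ℝ) ≤
      -(((η - a) ^ 2 - 1) * (2 * x - a) + (a * η ^ 2 - η * (a ^ 2 - 1)))) h2
    linarith

private lemma gam_pos (a σ η s : ℝ) (h1 : 0 < σ ^ 2 * s) (h2 : σ ^ 2 * s < 2 * η) :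
    0 < Gam a σ η s := by
  unfold Gam
  nlinarith [sq_nonneg (2 * σ ^ 2 * (η - a) * s + (a ^ 2 - 1)),
    mul_pos h1 (show (0:ℝ) < 2 * η - σ ^ 2 * s by linarith)]

private lemma gam_deriv (a σ η s : ℝ) :
    HasDerivAt (Gam a σ η)
      (8 * σ ^ 4 * ((-a + η) ^ 2 - 1) * s + 4 * σ ^ 2 * ((-a + η) * (a ^ 2 - 1) + 2 * η)) s := by
  have h2 : (Gam a σ η) = fun x : ℝ =>
      4 * σ ^ 4 * ((-a + η) ^ 2 - 1) * x ^ 2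
        + (4 * σ ^ 2 * ((-a + η) * (a ^ 2 - 1) + 2 * η) * x + (a ^ 2 - 1) ^ 2) := by
    funext x; unfold Gam; ring
  rw [h2]
  have hp : HasDerivAt (fun x : ℝ => x ^ 2) (2 * s) s := by
    simpa using hasDerivAt_pow 2 s
  have := (hp.const_mul (4 * σ ^ 4 * ((-a + η) ^ 2 - 1))).add
    (((hasDerivAt_id s).const_mul (4 * σ ^ 2 * ((-a + η) * (a ^ 2 - 1) + 2 * η))).add_const
      ((a ^ 2 - 1) ^ 2))
  exact this.congr_deriv (by ring)

private lemma tOne_deriv (a σ η s : ℝ) (hG : Gam a σ η s ≠ 0) :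
    HasDerivAt (tOne a σ η)
      ((-(2 * σ ^ 2 * (-a + η)) -
        (8 * σ ^ 4 * ((-a + η) ^ 2 - 1) * s + 4 * σ ^ 2 * ((-a + η) * (a ^ 2 - 1) + 2 * η)) /
          (2 * Real.sqrt (Gam a σ η s))) / (4 * σ ^ 2)) s := by
  have hsq := (gam_deriv a σ η s).sqrt hG
  have hlin : HasDerivAt (fun x : ℝ => -(a ^ 2 + 2 * σ ^ 2 * x * (-a + η) - 1))
      (-(2 * σ ^ 2 * (-a + η))) s := by
    have hfe : (fun x : ℝ => -(a ^ 2 + 2 * σ ^ 2 * x * (-a + η) - 1))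
        = fun x : ℝ => (-(2 * σ ^ 2 * (-a + η))) * x + (1 - a ^ 2) := by
      funext x; ring
    rw [hfe]
    simpa using ((hasDerivAt_id s).const_mul (-(2 * σ ^ 2 * (-a + η)))).add_const (1 - a ^ 2)
  have hfinal := (hlin.sub hsq).div_const (4 * σ ^ 2)
  exact hfinal.congr_of_eventuallyEq (Filter.Eventually.of_forall fun y => by unfold tOne; rfl)

private lemma tOne_deriv' (a σ η s : ℝ) (hσ : 0 < σ) (hG : 0 < Gam a σ η s) :
    HasDerivAt (tOne a σ η)
      (-((η - a) * Real.sqrt (Gam a σ η s) +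
          (((η - a) ^ 2 - 1) * (2 * (σ ^ 2 * s) - a) + (a * η ^ 2 - η * (a ^ 2 - 1)))) /
        (2 * Real.sqrt (Gam a σ η s))) s := by
  have h := tOne_deriv a σ η s hG.ne'
  convert h using 1
  have hS : Real.sqrt (Gam a σ η s) ≠ 0 := (Real.sqrt_pos.mpr hG).ne'
  have hσ' : σ ≠ 0 := hσ.ne'
  field_simp
  ring

private lemma tOne_cont (a σ η : ℝ) : Continuous (tOne a σ η) := by
  unfold tOne Gam
  fun_prop

private lemma sqrt_sq_gam (a σ η s : ℝ) (hG : 0 ≤ Gam a σ η s) :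
    (Real.sqrt (Gam a σ η s)) ^ 2
      = (2 * (η - a) * (σ ^ 2 * s) + (a ^ 2 - 1)) ^ 2
          + 4 * (σ ^ 2 * s) * (2 * η - σ ^ 2 * s) := by
  rw [Real.sq_sqrt hG]; unfold Gam; ring

theorem statement11 (a σ η : ℝ) (ha : 1 < a) (hσ : 0 < σ) (hη : 0 < η) :
    -- (1) if 0 < η ≤ η₁, then t₁ is increasing in s on I_η = (0, 2η/σ²]
    (η ≤ (a ^ 2 - 1) / a →
      StrictMonoOn (tOne a σ η) (Set.Ioc 0 (2 * η / σ ^ 2))) ∧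
    -- (2) if η ≥ η₂, then t₁ is decreasing in s on I_η
    ((3 * a + Real.sqrt (a ^ 2 + 8)) / 4 ≤ η →
      StrictAntiOn (tOne a σ η) (Set.Ioc 0 (2 * η / σ ^ 2))) ∧
    -- (3) if η₁ < η < η₂, then with s* = aη(η − η₁)/(σ²(1 − (η − a)²)),
    -- s* ∈ (0, 2η/σ²), t₁ is decreasing on (0, s*), increasing on (s*, 2η/σ²),
    -- and the derivative of t₁ vanishes at s*
    ((a ^ 2 - 1) / a < η → η < (3 * a + Real.sqrt (a ^ 2 + 8)) / 4 →
      let sStar : ℝ := a * η * (η - (a ^ 2 - 1) / a) / (σ ^ 2 * (1 - (η - a) ^ 2))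
      sStar ∈ Set.Ioo 0 (2 * η / σ ^ 2) ∧
        StrictAntiOn (tOne a σ η) (Set.Ioo 0 sStar) ∧
        StrictMonoOn (tOne a σ η) (Set.Ioo sStar (2 * η / σ ^ 2)) ∧
        HasDerivAt (tOne a σ η) 0 sStar) := by
  have ha0 : (0:ℝ) < a := by linarith
  have hσ2 : (0:ℝ) < σ ^ 2 := by positivity
  refine ⟨?_, ?_, ?_⟩
  · -- Case 1
    intro hcase
    have hcase' : a * η ≤ a ^ 2 - 1 := by
      rw [le_div_iff₀ ha0] at hcase; linarith
    apply strictMonoOn_of_deriv_pos (convex_Ioc _ _) (tOne_cont a σ η).continuousOn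
    intro s hs
    rw [interior_Ioc] at hs
    obtain ⟨hs1, hs2⟩ := hs
    have hx : 0 < σ ^ 2 * s := by positivity
    have hx2 : σ ^ 2 * s < 2 * η := by
      rw [lt_div_iff₀ hσ2] at hs2; linarith
    have hG := gam_pos a σ η s hx hx2
    have hS := Real.sqrt_pos.mpr hG
    have hnum := signA a η (σ ^ 2 * s) (Real.sqrt (Gam a σ η s)) ha hη hx hx2 hcase' hS
      (sqrt_sq_gam a σ η s hG.le)
    rw [(tOne_deriv' a σ η s hσ hG).deriv]
    apply div_pos (by linarith) (by linarith)
  · -- Case 2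
    intro hcase
    have hsq8 : Real.sqrt (a ^ 2 + 8) ^ 2 = a ^ 2 + 8 :=
      Real.sq_sqrt (by positivity)
    have hsq8' : 0 ≤ Real.sqrt (a ^ 2 + 8) := Real.sqrt_nonneg _
    have hb : a < η := by nlinarith [hsq8, hsq8']
    have hple : Real.sqrt (a ^ 2 + 8) ≤ 4 * η - 3 * a := by linarith
    have hp : 0 ≤ 2 * η ^ 2 - 3 * a * η + a ^ 2 - 1 := by
      nlinarith [hsq8, hsq8', hple]
    apply strictAntiOn_of_deriv_neg (convex_Ioc _ _) (tOne_cont a σ η).continuousOn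
    intro s hs
    rw [interior_Ioc] at hs
    obtain ⟨hs1, hs2⟩ := hs
    have hx : 0 < σ ^ 2 * s := by positivity
    have hx2 : σ ^ 2 * s < 2 * η := by
      rw [lt_div_iff₀ hσ2] at hs2; linarith
    have hG := gam_pos a σ η s hx hx2
    have hS := Real.sqrt_pos.mpr hG
    have hnum := signB a η (σ ^ 2 * s) (Real.sqrt (Gam a σ η s)) ha hb hx hx2 hp hS
      (sqrt_sq_gam a σ η s hG.le)
    rw [(tOne_deriv' a σ η s hσ hG).deriv]
    apply div_neg_of_neg_of_pos (by linarith) (by linarith)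
  · -- Case 3
    intro h1 h2
    intro sStar
    have hm : a ^ 2 - 1 < a * η := by
      rw [div_lt_iff₀ ha0] at h1; linarith
    have hsq8 : Real.sqrt (a ^ 2 + 8) ^ 2 = a ^ 2 + 8 :=
      Real.sq_sqrt (by positivity)
    have hsq8' : 0 ≤ Real.sqrt (a ^ 2 + 8) := Real.sqrt_nonneg _
    have hp : 2 * η ^ 2 - 3 * a * η + a ^ 2 - 1 < 0 := by
      rcases le_or_gt 0 (4 * η - 3 * a) with hc | hc
      · have h4 : 4 * η - 3 * a < Real.sqrt (a ^ 2 + 8) := by linarith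
        nlinarith [mul_pos (show 0 < Real.sqrt (a ^ 2 + 8) - (4 * η - 3 * a) by linarith)
          (show 0 < Real.sqrt (a ^ 2 + 8) + (4 * η - 3 * a) by
            rcases eq_or_lt_of_le hsq8' with he | hlt
            · nlinarith [hsq8]
            · linarith)]
      · nlinarith
    have hb2 : (η - a) ^ 2 < 1 := by
      have hlow : -1 < η - a := by nlinarith
      have hhigh : η - a < 1 := by nlinarith [sq_nonneg (η - a - 1)]
      nlinarith
    have hden : (0:ℝ) < 1 - (η - a) ^ 2 := by linarith
    have hK : 0 < a * η ^ 2 - η * (a ^ 2 - 1) := by nlinarith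
    have hsEq : sStar = (a * η ^ 2 - η * (a ^ 2 - 1)) / (σ ^ 2 * (1 - (η - a) ^ 2)) := by
      show a * η * (η - (a ^ 2 - 1) / a) / (σ ^ 2 * (1 - (η - a) ^ 2)) = _
      have hnum : a * η * (η - (a ^ 2 - 1) / a) = a * η ^ 2 - η * (a ^ 2 - 1) := by
        field_simp
      rw [hnum]
    have hsPos : 0 < sStar := by
      rw [hsEq]; exact div_pos hK (by positivity)
    have hsUpper : sStar < 2 * η / σ ^ 2 := by
      rw [hsEq, div_lt_div_iff₀ (by positivity) hσ2]
      nlinarith [mul_pos (mul_pos hσ2 hη)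
        (show 0 < -(2 * η ^ 2 - 3 * a * η + a ^ 2 - 1) by linarith)]
    refine ⟨⟨hsPos, hsUpper⟩, ?_, ?_, ?_⟩
    · -- decreasing on (0, sStar)
      apply strictAntiOn_of_deriv_neg (convex_Ioo _ _) (tOne_cont a σ η).continuousOn
      rw [interior_Ioo]
      intro s hs
      obtain ⟨hs1, hs2⟩ := hs
      have hx : 0 < σ ^ 2 * s := by positivity
      have hxst : (σ ^ 2 * s) * (1 - (η - a) ^ 2) < a * η ^ 2 - η * (a ^ 2 - 1) := by
        rw [hsEq, lt_div_iff₀ (by positivity)] at hs2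
        nlinarith [hs2]
      have hx2 : σ ^ 2 * s < 2 * η := by
        have := hs2.trans hsUpper
        rw [lt_div_iff₀ hσ2] at this; linarith
      have hG := gam_pos a σ η s hx hx2
      have hS := Real.sqrt_pos.mpr hG
      have hnum := signC a η (σ ^ 2 * s) (Real.sqrt (Gam a σ η s)) ha hη hm hp hx hxst hS
        (sqrt_sq_gam a σ η s hG.le)
      rw [(tOne_deriv' a σ η s hσ hG).deriv]
      apply div_neg_of_neg_of_pos (by linarith) (by linarith)
    · -- increasing on (sStar, 2η/σ²)
      apply strictMonoOn_of_deriv_pos (convex_Ioo _ _) (tOne_cont a σ η).continuousOn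
      rw [interior_Ioo]
      intro s hs
      obtain ⟨hs1, hs2⟩ := hs
      have hx : 0 < σ ^ 2 * s := mul_pos hσ2 (hsPos.trans hs1)
      have hxst : a * η ^ 2 - η * (a ^ 2 - 1) < (σ ^ 2 * s) * (1 - (η - a) ^ 2) := by
        rw [hsEq, div_lt_iff₀ (by positivity)] at hs1
        nlinarith [hs1]
      have hx2 : σ ^ 2 * s < 2 * η := by
        rw [lt_div_iff₀ hσ2] at hs2; linarith
      have hG := gam_pos a σ η s hx hx2
      have hS := Real.sqrt_pos.mpr hG
      have hnum := signD a η (σ ^ 2 * s) (Real.sqrt (Gam a σ η s)) ha hη hm hp hxst hS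
        (sqrt_sq_gam a σ η s hG.le)
      rw [(tOne_deriv' a σ η s hσ hG).deriv]
      apply div_pos (by linarith) (by linarith)
    · -- derivative vanishes at sStar
      have hx : 0 < σ ^ 2 * sStar := by positivity
      have hx2 : σ ^ 2 * sStar < 2 * η := by
        have := hsUpper
        rw [lt_div_iff₀ hσ2] at this; linarith
      have hG := gam_pos a σ η sStar hx hx2
      have hM : (0:ℝ) < 2 * a * η - (a ^ 2 - 1) := by nlinarith
      have hsqrt : Real.sqrt (Gam a σ η sStar) = 2 * a * η - (a ^ 2 - 1) := by
        have h4 : Gam a σ η sStar = (2 * a * η - (a ^ 2 - 1)) ^ 2 := by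
          rw [hsEq]; unfold Gam
          field_simp
          ring
        rw [h4, Real.sqrt_sq hM.le]
      have hD := tOne_deriv' a σ η sStar hσ hG
      have h0 : -((η - a) * Real.sqrt (Gam a σ η sStar) +
          (((η - a) ^ 2 - 1) * (2 * (σ ^ 2 * sStar) - a) + (a * η ^ 2 - η * (a ^ 2 - 1)))) /
            (2 * Real.sqrt (Gam a σ η sStar)) = 0 := by
        rw [hsqrt, hsEq]
        rw [div_eq_zero_iff]
        left
        rw [neg_eq_zero]
        field_simp
        ring
      exact h0 ▸ hD
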